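/- Let q ≥ 3 be an integer, N = (q−2)/2 if q is even and N = q−2 if q is odd, and b_l (0 ≤ l ≤ N−1) as in the context. Let κ, κ̃ : ℕ → ℝ satisfy, for all n: κ̃_n ≤ κ_n ≤ 0, κ_n ≤ (6−q)/(q−2), and (if q = 5) κ_n ≤ −2/3. Let σ, σ̃ : ℕ → ℝ be nonnegative sequences with σ_0 = σ̃_0 = 1, σ_1 = 2q/(q−2) − κ_0, σ̃_1 = 2q/(q−2) − κ̃_0, and suppose that for all n ≥ 1: σ_{n+1} = σ_1 + Σ_{l=0}^{n−1}(b_l − κ_{n−l})σ_{n−l} if n < N, σ_{N+1} = Σ_{l=0}^{N−1}(b_l − κ_{N−l})σ_{N−l} if n = N, and σ_{n+1} = −σ_{n−N} + Σ_{l=0}^{N−1}(b_l − κ_{n−l})σ_{n−l} if n > N, and that σ̃ satisfies the same recursion with κ replaced by κ̃. Then the difference sequence γ_n = σ̃_n − σ_n is nonnegative and monotone non-decreasing: 0 ≤ γ_n ≤ γ_{n+1} for all n. In particular σ̃_n ≥ σ_n for all n. -/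
import Mathlib

private lemma sigma_growth_engine (N : ℕ) (γ c : ℕ → ℝ) (hγ0 : γ 0 = 0) (hγ1 : 0 ≤ γ 1)
    (H1 : ∀ n, 1 ≤ n → (∀ m, m ≤ n → 0 ≤ γ m) →
      (n < N → γ 1 + ∑ l ∈ Finset.range n, c l * γ (n - l) ≤ γ (n + 1)) ∧
      (n = N → ∑ l ∈ Finset.range N, c l * γ (N - l) ≤ γ (N + 1)) ∧
      (N < n → -γ (n - N) + ∑ l ∈ Finset.range N, c l * γ (n - l) ≤ γ (n + 1)))
    (HA : ∀ n, 1 ≤ n → n ≤ N → (∀ a b, a ≤ b → b ≤ n → γ a ≤ γ b) →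
      γ n ≤ ∑ l ∈ Finset.range n, c l * γ (n - l))
    (HB : ∀ n, N < n → (∀ a b, a ≤ b → b ≤ n → γ a ≤ γ b) →
      γ n + γ (n - N) ≤ ∑ l ∈ Finset.range N, c l * γ (n - l)) :
    ∀ n, 0 ≤ γ n ∧ γ n ≤ γ (n + 1) := by
  intro n
  induction n using Nat.strong_induction_on with
  | _ n IH =>
    rcases Nat.eq_zero_or_pos n with rfl | hn
    · exact ⟨hγ0.symm.le, by rw [hγ0]; exact hγ1⟩
    · have mono : ∀ b, b ≤ n → ∀ a, a ≤ b → γ a ≤ γ b := by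
        intro b
        induction b with
        | zero => intro _ a ha; rw [Nat.le_zero.mp ha]
        | succ b ihb =>
          intro hb a ha
          rcases Nat.eq_or_lt_of_le ha with rfl | ha'
          · exact le_refl _
          · exact le_trans (ihb (by omega) a (by omega)) (IH b (by omega)).2
      have mono' : ∀ a b, a ≤ b → b ≤ n → γ a ≤ γ b := fun a b hab hbn => mono b hbn a hab
      have nonneg : ∀ m, m ≤ n → 0 ≤ γ m := by
        intro m hm
        have := mono' 0 m (Nat.zero_le _) hm
        rwa [hγ0] at this
      refine ⟨nonneg n le_rfl, ?_⟩
      obtain ⟨P1, P2, P3⟩ := H1 n hn nonneg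
      rcases lt_trichotomy n N with hlt | heq | hgt
      · have h1 := HA n hn hlt.le mono'
        have h2 := P1 hlt
        linarith
      · subst heq
        have h1 := HA n hn le_rfl mono'
        have h2 := P2 rfl
        linarith
      · have h1 := HB n hgt mono'
        have h2 := P3 hgt
        linarith

private lemma sigma_growth_bridge (N : ℕ) (b κ κ' σ σ' : ℕ → ℝ) (K : ℝ)
    (hκK : ∀ m, κ m ≤ K) (hκκ' : ∀ m, κ' m ≤ κ m) (hσ'nn : ∀ m, 0 ≤ σ' m)
    (hrec : ∀ n, 1 ≤ n →
      (n < N → σ (n + 1) = σ 1 + ∑ l ∈ Finset.range n, (b l - κ (n - l)) * σ (n - l)) ∧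
      (n = N → σ (N + 1) = ∑ l ∈ Finset.range N, (b l - κ (N - l)) * σ (N - l)) ∧
      (N < n → σ (n + 1) = -σ (n - N) + ∑ l ∈ Finset.range N, (b l - κ (n - l)) * σ (n - l)))
    (hrec' : ∀ n, 1 ≤ n →
      (n < N → σ' (n + 1) = σ' 1 + ∑ l ∈ Finset.range n, (b l - κ' (n - l)) * σ' (n - l)) ∧
      (n = N → σ' (N + 1) = ∑ l ∈ Finset.range N, (b l - κ' (N - l)) * σ' (N - l)) ∧
      (N < n → σ' (n + 1) = -σ' (n - N) + ∑ l ∈ Finset.range N, (b l - κ' (n - l)) * σ' (n - l))) :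
    ∀ n, 1 ≤ n → (∀ m, m ≤ n → 0 ≤ σ' m - σ m) →
      (n < N → (σ' 1 - σ 1) + ∑ l ∈ Finset.range n, (b l - K) * (σ' (n - l) - σ (n - l)) ≤ σ' (n + 1) - σ (n + 1)) ∧
      (n = N → ∑ l ∈ Finset.range N, (b l - K) * (σ' (N - l) - σ (N - l)) ≤ σ' (N + 1) - σ (N + 1)) ∧
      (N < n → -(σ' (n - N) - σ (n - N)) + ∑ l ∈ Finset.range N, (b l - K) * (σ' (n - l) - σ (n - l)) ≤ σ' (n + 1) - σ (n + 1)) := by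
  intro n hn hγnn
  obtain ⟨R1, R2, R3⟩ := hrec n hn
  obtain ⟨R1', R2', R3'⟩ := hrec' n hn
  have sumle : ∀ w : ℕ,
      ∑ l ∈ Finset.range w, (b l - K) * (σ' (n - l) - σ (n - l)) ≤
      ∑ l ∈ Finset.range w, (b l - κ' (n - l)) * σ' (n - l) -
      ∑ l ∈ Finset.range w, (b l - κ (n - l)) * σ (n - l) := by
    intro w
    rw [← Finset.sum_sub_distrib]
    refine Finset.sum_le_sum ?_
    intro l _
    have hγ : 0 ≤ σ' (n - l) - σ (n - l) := hγnn _ (Nat.sub_le _ _)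
    have h1 : (b l - K) * (σ' (n - l) - σ (n - l)) ≤
        (b l - κ (n - l)) * (σ' (n - l) - σ (n - l)) :=
      mul_le_mul_of_nonneg_right (by have := hκK (n - l); linarith) hγ
    have h2 : 0 ≤ (κ (n - l) - κ' (n - l)) * σ' (n - l) :=
      mul_nonneg (by have := hκκ' (n - l); linarith) (hσ'nn _)
    have h3 : (b l - κ' (n - l)) * σ' (n - l) - (b l - κ (n - l)) * σ (n - l) =
        (b l - κ (n - l)) * (σ' (n - l) - σ (n - l)) + (κ (n - l) - κ' (n - l)) * σ' (n - l) := by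
      ring
    linarith
  refine ⟨?_, ?_, ?_⟩
  · intro hlt
    rw [R1 hlt, R1' hlt]
    have := sumle n
    linarith
  · intro hnN
    subst hnN
    rw [R2 rfl, R2' rfl]
    have := sumle n
    linarith
  · intro hgt
    rw [R3 hgt, R3' hgt]
    have := sumle N
    linarith

/-- STATEMENT 11 (the paper's Theorem 3, curvature/growth comparison), stated for abstract
sequences: `σ, σ'` are the sphere-cardinality sequences of two `q`-face regular plane
tessellations with non-positive vertex curvature, `κ, κ'` are the corresponding normalized
average spherical curvatures (satisfying `κ' n ≤ κ n ≤ 0` and the bounds expressing vertex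
degrees ≥ 3 and non-positive vertex curvature), and both satisfy the growth recursion of the
paper's Theorem 2.  Conclusion: `γ n = σ' n - σ n` is nonnegative and monotone non-decreasing;
in particular `σ' n ≥ σ n` for all `n`. -/
theorem curvature_growth_comparison (q : ℕ) (hq : 3 ≤ q)
    (N : ℕ) (hN : N = if Even q then (q - 2) / 2 else q - 2)
    (b : ℕ → ℝ)
    (hb : ∀ l, l ≤ N - 1 →
      b l = if ¬ Even q ∧ l = (N - 1) / 2 then 4 / ((q : ℝ) - 2) - 2 else 4 / ((q : ℝ) - 2))
    (κ κ' : ℕ → ℝ)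
    (hκκ' : ∀ n, κ' n ≤ κ n) (hκ0 : ∀ n, κ n ≤ 0)
    (hκb : ∀ n, κ n ≤ (6 - (q : ℝ)) / ((q : ℝ) - 2))
    (hκ5 : q = 5 → ∀ n, κ n ≤ -2 / 3)
    (σ σ' : ℕ → ℝ)
    (hσnn : ∀ n, 0 ≤ σ n) (hσ'nn : ∀ n, 0 ≤ σ' n)
    (hσ0 : σ 0 = 1) (hσ'0 : σ' 0 = 1)
    (hσ1 : σ 1 = 2 * (q : ℝ) / ((q : ℝ) - 2) - κ 0)
    (hσ'1 : σ' 1 = 2 * (q : ℝ) / ((q : ℝ) - 2) - κ' 0)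
    (hrec : ∀ n, 1 ≤ n →
      (n < N → σ (n + 1) = σ 1 + ∑ l ∈ Finset.range n, (b l - κ (n - l)) * σ (n - l)) ∧
      (n = N → σ (N + 1) = ∑ l ∈ Finset.range N, (b l - κ (N - l)) * σ (N - l)) ∧
      (N < n → σ (n + 1) = -σ (n - N) + ∑ l ∈ Finset.range N, (b l - κ (n - l)) * σ (n - l)))
    (hrec' : ∀ n, 1 ≤ n →
      (n < N → σ' (n + 1) = σ' 1 + ∑ l ∈ Finset.range n, (b l - κ' (n - l)) * σ' (n - l)) ∧
      (n = N → σ' (N + 1) = ∑ l ∈ Finset.range N, (b l - κ' (N - l)) * σ' (N - l)) ∧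
      (N < n → σ' (n + 1) = -σ' (n - N) + ∑ l ∈ Finset.range N, (b l - κ' (n - l)) * σ' (n - l))) :
    ∀ n, 0 ≤ σ' n - σ n ∧ σ' n - σ n ≤ σ' (n + 1) - σ (n + 1) := by
  have hrq : (0:ℝ) < (q:ℝ) - 2 := by
    have : (3:ℝ) ≤ (q:ℝ) := by exact_mod_cast hq
    linarith
  have hγ0 : σ' 0 - σ 0 = 0 := by rw [hσ0, hσ'0]; ring
  have hγ1 : 0 ≤ σ' 1 - σ 1 := by rw [hσ1, hσ'1]; have := hκκ' 0; linarith
  have hone : (4:ℝ)/((q:ℝ)-2) - (6-(q:ℝ))/((q:ℝ)-2) = 1 := by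
    rw [div_sub_div_same, div_eq_one_iff_eq hrq.ne']
    ring
  rcases Nat.even_or_odd q with hev | hodd
  · -- q even
    have hNe : N = (q - 2) / 2 := by rw [hN, if_pos hev]
    have hbe : ∀ l, l ≤ N - 1 → b l = 4 / ((q:ℝ) - 2) := by
      intro l hl
      rw [hb l hl, if_neg]
      rintro ⟨h, -⟩; exact h hev
    by_cases hq4 : q = 4
    · -- q = 4 : N = 1, coefficient 2, K = 0
      subst hq4
      have hN1 : N = 1 := by omega
      have cv : b 0 - (0:ℝ) = 2 := by
        rw [hbe 0 (by omega)]
        norm_num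
      refine sigma_growth_engine N (fun m => σ' m - σ m) (fun l => b l - (0:ℝ)) hγ0 hγ1
        (sigma_growth_bridge N b κ κ' σ σ' 0 hκ0 hκκ' hσ'nn hrec hrec') ?_ ?_
      · intro n hn1 hnN mono
        have hn : n = 1 := by omega
        subst hn
        show σ' 1 - σ 1 ≤ ∑ l ∈ Finset.range 1, (b l - (0:ℝ)) * (σ' (1 - l) - σ (1 - l))
        rw [Finset.sum_range_one]
        have h0 : σ' 0 - σ 0 ≤ σ' 1 - σ 1 := mono 0 1 (by omega) (by omega)
        simp only [Nat.sub_zero]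
        rw [cv]
        linarith
      · intro n hgt mono
        rw [hN1] at hgt
        show σ' n - σ n + (σ' (n - N) - σ (n - N)) ≤
          ∑ l ∈ Finset.range N, (b l - (0:ℝ)) * (σ' (n - l) - σ (n - l))
        rw [hN1, Finset.sum_range_one]
        simp only [Nat.sub_zero]
        rw [cv]
        have h1 : σ' (n - 1) - σ (n - 1) ≤ σ' n - σ n := mono (n - 1) n (by omega) le_rfl
        have h2 : σ' 0 - σ 0 ≤ σ' n - σ n := mono 0 n (by omega) le_rfl
        linarith
    · -- q even, q ≥ 6 : all coefficients 1
      have hq6 : 6 ≤ q := by obtain ⟨k, hk⟩ := hev; omega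
      have hN2 : 2 ≤ N := by omega
      have cv : ∀ l, l < N → b l - (6 - (q:ℝ))/((q:ℝ)-2) = 1 := by
        intro l hl
        rw [hbe l (by omega)]
        exact hone
      refine sigma_growth_engine N (fun m => σ' m - σ m)
        (fun l => b l - (6 - (q:ℝ))/((q:ℝ)-2)) hγ0 hγ1
        (sigma_growth_bridge N b κ κ' σ σ' _ hκb hκκ' hσ'nn hrec hrec') ?_ ?_
      · intro n hn1 hnN mono
        have nn : ∀ m, m ≤ n → 0 ≤ σ' m - σ m := by
          intro m hm
          have h : σ' 0 - σ 0 ≤ σ' m - σ m := mono 0 m (Nat.zero_le _) hm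
          linarith
        show σ' n - σ n ≤
          ∑ l ∈ Finset.range n, (b l - (6 - (q:ℝ))/((q:ℝ)-2)) * (σ' (n - l) - σ (n - l))
        have e1 : ∑ l ∈ Finset.range n, (b l - (6 - (q:ℝ))/((q:ℝ)-2)) * (σ' (n - l) - σ (n - l))
            = ∑ l ∈ Finset.range n, (σ' (n - l) - σ (n - l)) := by
          refine Finset.sum_congr rfl (fun l hl => ?_)
          rw [cv l (by have := Finset.mem_range.mp hl; omega)]
          ring
        rw [e1]
        have hsub : ({0} : Finset ℕ) ⊆ Finset.range n := by
          simp only [Finset.singleton_subset_iff, Finset.mem_range]; omega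
        have hle := Finset.sum_le_sum_of_subset_of_nonneg
          (f := fun l => σ' (n - l) - σ (n - l)) hsub (fun i _ _ => nn _ (Nat.sub_le _ _))
        rw [Finset.sum_singleton] at hle
        simpa using hle
      · intro n hgt mono
        have nn : ∀ m, m ≤ n → 0 ≤ σ' m - σ m := by
          intro m hm
          have h : σ' 0 - σ 0 ≤ σ' m - σ m := mono 0 m (Nat.zero_le _) hm
          linarith
        show σ' n - σ n + (σ' (n - N) - σ (n - N)) ≤
          ∑ l ∈ Finset.range N, (b l - (6 - (q:ℝ))/((q:ℝ)-2)) * (σ' (n - l) - σ (n - l))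
        have e1 : ∑ l ∈ Finset.range N, (b l - (6 - (q:ℝ))/((q:ℝ)-2)) * (σ' (n - l) - σ (n - l))
            = ∑ l ∈ Finset.range N, (σ' (n - l) - σ (n - l)) := by
          refine Finset.sum_congr rfl (fun l hl => ?_)
          rw [cv l (Finset.mem_range.mp hl)]
          ring
        rw [e1]
        have hsub : ({0, 1} : Finset ℕ) ⊆ Finset.range N := by
          intro x hx
          simp only [Finset.mem_insert, Finset.mem_singleton] at hx
          rcases hx with rfl | rfl <;> simp only [Finset.mem_range] <;> omega
        have hle := Finset.sum_le_sum_of_subset_of_nonneg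
          (f := fun l => σ' (n - l) - σ (n - l)) hsub (fun i _ _ => nn _ (Nat.sub_le _ _))
        rw [Finset.sum_pair (by norm_num : (0:ℕ) ≠ 1)] at hle
        simp only [Nat.sub_zero] at hle
        have h1 : σ' (n - N) - σ (n - N) ≤ σ' (n - 1) - σ (n - 1) :=
          mono (n - N) (n - 1) (by omega) (by omega)
        linarith
  · -- q odd
    have hno : ¬ Even q := Nat.not_even_iff_odd.mpr hodd
    have hNo : N = q - 2 := by rw [hN, if_neg hno]
    obtain ⟨k, hk⟩ := hodd
    by_cases hq3 : q = 3
    · -- q = 3 : N = 1, b 0 = 2 (dip at 0), K = 0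
      subst hq3
      have hN1 : N = 1 := by omega
      have cv : b 0 - (0:ℝ) = 2 := by
        rw [hb 0 (by omega), if_pos ⟨hno, by omega⟩]
        norm_num
      refine sigma_growth_engine N (fun m => σ' m - σ m) (fun l => b l - (0:ℝ)) hγ0 hγ1
        (sigma_growth_bridge N b κ κ' σ σ' 0 hκ0 hκκ' hσ'nn hrec hrec') ?_ ?_
      · intro n hn1 hnN mono
        have hn : n = 1 := by omega
        subst hn
        show σ' 1 - σ 1 ≤ ∑ l ∈ Finset.range 1, (b l - (0:ℝ)) * (σ' (1 - l) - σ (1 - l))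
        rw [Finset.sum_range_one]
        have h0 : σ' 0 - σ 0 ≤ σ' 1 - σ 1 := mono 0 1 (by omega) (by omega)
        simp only [Nat.sub_zero]
        rw [cv]
        linarith
      · intro n hgt mono
        rw [hN1] at hgt
        show σ' n - σ n + (σ' (n - N) - σ (n - N)) ≤
          ∑ l ∈ Finset.range N, (b l - (0:ℝ)) * (σ' (n - l) - σ (n - l))
        rw [hN1, Finset.sum_range_one]
        simp only [Nat.sub_zero]
        rw [cv]
        have h1 : σ' (n - 1) - σ (n - 1) ≤ σ' n - σ n := mono (n - 1) n (by omega) le_rfl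
        have h2 : σ' 0 - σ 0 ≤ σ' n - σ n := mono 0 n (by omega) le_rfl
        linarith
    · by_cases hq5 : q = 5
      · -- q = 5 : N = 3, coefficients (2, 0, 2), K = -2/3
        subst hq5
        have hN3 : N = 3 := by omega
        have hd1 : (N - 1) / 2 = 1 := by omega
        have cv0 : b 0 - (-2/3 : ℝ) = 2 := by
          rw [hb 0 (by omega), if_neg (by rw [hd1]; rintro ⟨-, h⟩; omega)]
          norm_num
        have cv1 : b 1 - (-2/3 : ℝ) = 0 := by
          rw [hb 1 (by omega), if_pos ⟨hno, by omega⟩]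
          norm_num
        have cv2 : b 2 - (-2/3 : ℝ) = 2 := by
          rw [hb 2 (by omega), if_neg (by rw [hd1]; rintro ⟨-, h⟩; omega)]
          norm_num
        refine sigma_growth_engine N (fun m => σ' m - σ m) (fun l => b l - (-2/3 : ℝ)) hγ0 hγ1
          (sigma_growth_bridge N b κ κ' σ σ' (-2/3) (hκ5 rfl) hκκ' hσ'nn hrec hrec') ?_ ?_
        · intro n hn1 hnN mono
          have nn : ∀ m, m ≤ n → 0 ≤ σ' m - σ m := by
            intro m hm
            have h : σ' 0 - σ 0 ≤ σ' m - σ m := mono 0 m (Nat.zero_le _) hm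
            linarith
          show σ' n - σ n ≤
            ∑ l ∈ Finset.range n, (b l - (-2/3 : ℝ)) * (σ' (n - l) - σ (n - l))
          rw [hN3] at hnN
          interval_cases n
          · rw [Finset.sum_range_one]
            simp only [Nat.sub_zero]
            rw [cv0]
            have := nn 1 (by omega)
            linarith
          · rw [Finset.sum_range_succ, Finset.sum_range_one]
            simp only [Nat.sub_zero]
            rw [cv0, cv1]
            have := nn 2 (by omega)
            have h1 := nn 1 (by omega)
            linarith
          · rw [Finset.sum_range_succ, Finset.sum_range_succ, Finset.sum_range_one]
            simp only [Nat.sub_zero]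
            rw [cv0, cv1, cv2]
            have h3 := nn 3 (by omega)
            have h1 := nn 1 (by omega)
            have h2 := nn 2 (by omega)
            linarith
        · intro n hgt mono
          have nn : ∀ m, m ≤ n → 0 ≤ σ' m - σ m := by
            intro m hm
            have h : σ' 0 - σ 0 ≤ σ' m - σ m := mono 0 m (Nat.zero_le _) hm
            linarith
          rw [hN3] at hgt
          show σ' n - σ n + (σ' (n - N) - σ (n - N)) ≤
            ∑ l ∈ Finset.range N, (b l - (-2/3 : ℝ)) * (σ' (n - l) - σ (n - l))
          rw [hN3, Finset.sum_range_succ, Finset.sum_range_succ, Finset.sum_range_one]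
          simp only [Nat.sub_zero]
          rw [cv0, cv1, cv2]
          have h1 : σ' (n - 3) - σ (n - 3) ≤ σ' (n - 2) - σ (n - 2) :=
            mono (n - 3) (n - 2) (by omega) (by omega)
          have h2 := nn n le_rfl
          have h3 := nn (n - 2) (by omega)
          linarith
      · -- q odd, q ≥ 7
        have hq7 : 7 ≤ q := by omega
        set d := (N - 1) / 2 with hd
        have hd2 : 2 ≤ d := by omega
        have hNd : N = 2 * d + 1 := by omega
        have cvd : b d - (6 - (q:ℝ))/((q:ℝ)-2) = -1 := by
          rw [hb d (by omega), if_pos ⟨hno, rfl⟩]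
          linarith [hone]
        have cv : ∀ l, l < N → l ≠ d → b l - (6 - (q:ℝ))/((q:ℝ)-2) = 1 := by
          intro l hl hld
          rw [hb l (by omega), if_neg (by rintro ⟨-, h⟩; exact hld h)]
          exact hone
        refine sigma_growth_engine N (fun m => σ' m - σ m)
          (fun l => b l - (6 - (q:ℝ))/((q:ℝ)-2)) hγ0 hγ1
          (sigma_growth_bridge N b κ κ' σ σ' _ hκb hκκ' hσ'nn hrec hrec') ?_ ?_
        · intro n hn1 hnN mono
          have nn : ∀ m, m ≤ n → 0 ≤ σ' m - σ m := by
            intro m hm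
            have h : σ' 0 - σ 0 ≤ σ' m - σ m := mono 0 m (Nat.zero_le _) hm
            linarith
          show σ' n - σ n ≤
            ∑ l ∈ Finset.range n, (b l - (6 - (q:ℝ))/((q:ℝ)-2)) * (σ' (n - l) - σ (n - l))
          by_cases hnd : n ≤ d
          · have e1 : ∑ l ∈ Finset.range n, (b l - (6 - (q:ℝ))/((q:ℝ)-2)) * (σ' (n - l) - σ (n - l))
                = ∑ l ∈ Finset.range n, (σ' (n - l) - σ (n - l)) := by
              refine Finset.sum_congr rfl (fun l hl => ?_)
              have hl' := Finset.mem_range.mp hl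
              rw [cv l (by omega) (by omega)]
              ring
            rw [e1]
            have hsub : ({0} : Finset ℕ) ⊆ Finset.range n := by
              simp only [Finset.singleton_subset_iff, Finset.mem_range]; omega
            have hle := Finset.sum_le_sum_of_subset_of_nonneg
              (f := fun l => σ' (n - l) - σ (n - l)) hsub (fun i _ _ => nn _ (Nat.sub_le _ _))
            rw [Finset.sum_singleton] at hle
            simpa using hle
          · push_neg at hnd
            have hdmem : d ∈ Finset.range n := Finset.mem_range.mpr hnd
            rw [← Finset.sum_erase_add _ _ hdmem]
            have e1 : ∑ l ∈ (Finset.range n).erase d,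
                (b l - (6 - (q:ℝ))/((q:ℝ)-2)) * (σ' (n - l) - σ (n - l))
                = ∑ l ∈ (Finset.range n).erase d, (σ' (n - l) - σ (n - l)) := by
              refine Finset.sum_congr rfl (fun l hl => ?_)
              obtain ⟨hne, hmem⟩ := Finset.mem_erase.mp hl
              have hl' := Finset.mem_range.mp hmem
              rw [cv l (by omega) hne]
              ring
            rw [e1, cvd]
            have hsub : ({0, 1} : Finset ℕ) ⊆ (Finset.range n).erase d := by
              intro x hx
              simp only [Finset.mem_insert, Finset.mem_singleton] at hx
              rcases hx with rfl | rfl <;>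
                (simp only [Finset.mem_erase, Finset.mem_range]; omega)
            have hle := Finset.sum_le_sum_of_subset_of_nonneg
              (f := fun l => σ' (n - l) - σ (n - l)) hsub (fun i _ _ => nn _ (Nat.sub_le _ _))
            rw [Finset.sum_pair (by norm_num : (0:ℕ) ≠ 1)] at hle
            simp only [Nat.sub_zero] at hle
            have h1 : σ' (n - d) - σ (n - d) ≤ σ' (n - 1) - σ (n - 1) :=
              mono (n - d) (n - 1) (by omega) (by omega)
            linarith
        · intro n hgt mono
          have nn : ∀ m, m ≤ n → 0 ≤ σ' m - σ m := by
            intro m hm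
            have h : σ' 0 - σ 0 ≤ σ' m - σ m := mono 0 m (Nat.zero_le _) hm
            linarith
          show σ' n - σ n + (σ' (n - N) - σ (n - N)) ≤
            ∑ l ∈ Finset.range N, (b l - (6 - (q:ℝ))/((q:ℝ)-2)) * (σ' (n - l) - σ (n - l))
          have hdmem : d ∈ Finset.range N := Finset.mem_range.mpr (by omega)
          rw [← Finset.sum_erase_add _ _ hdmem]
          have e1 : ∑ l ∈ (Finset.range N).erase d,
              (b l - (6 - (q:ℝ))/((q:ℝ)-2)) * (σ' (n - l) - σ (n - l))
              = ∑ l ∈ (Finset.range N).erase d, (σ' (n - l) - σ (n - l)) := by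
            refine Finset.sum_congr rfl (fun l hl => ?_)
            obtain ⟨hne, hmem⟩ := Finset.mem_erase.mp hl
            rw [cv l (Finset.mem_range.mp hmem) hne]
            ring
          rw [e1, cvd]
          have hsub : ({0, 1, 2*d} : Finset ℕ) ⊆ (Finset.range N).erase d := by
            intro x hx
            simp only [Finset.mem_insert, Finset.mem_singleton] at hx
            rcases hx with rfl | rfl | rfl <;>
              (simp only [Finset.mem_erase, Finset.mem_range]; omega)
          have hle := Finset.sum_le_sum_of_subset_of_nonneg
            (f := fun l => σ' (n - l) - σ (n - l)) hsub (fun i _ _ => nn _ (Nat.sub_le _ _))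
          rw [Finset.sum_insert (by simp; omega), Finset.sum_insert (by simp; omega),
            Finset.sum_singleton] at hle
          simp only [Nat.sub_zero] at hle
          have h1 : σ' (n - d) - σ (n - d) ≤ σ' (n - 1) - σ (n - 1) :=
            mono (n - d) (n - 1) (by omega) (by omega)
          have h2 : σ' (n - N) - σ (n - N) ≤ σ' (n - 2*d) - σ (n - 2*d) :=
            mono (n - N) (n - 2*d) (by omega) (by omega)
          linarith
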